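/- arXiv:1904.09481 — 3 statements merged into one kernel-verified Lean document; each statement's English description precedes it below -/
import Mathlib

section
/- If z = (a²+b²)(1+δ₁) and h = sqrt(z)·(1+δ₂) with |δ₁| ≤ 3ε/2, |δ₂| ≤ ε/2, 0 < ε ≤ 1, and a² + b² > 0, then h ≤ sqrt(a²+b²)·(1 + 5ε/4 + 3ε²/8). -/
theorem rounding_error_bound_threehalves (a b z h δ₁ δ₂ ε : ℝ)
    (hz : z = (a ^ 2 + b ^ 2) * (1 + δ₁))
    (hh : h = Real.sqrt z * (1 + δ₂))
    (h1 : |δ₁| ≤ 3 * ε / 2) (h2 : |δ₂| ≤ ε / 2)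
    (hε : 0 < ε) (hε1 : ε ≤ 1) (hab : 0 < a ^ 2 + b ^ 2) :
    h ≤ Real.sqrt (a ^ 2 + b ^ 2) * (1 + 5 * ε / 4 + 3 * ε ^ 2 / 8) := by
  have hd1 := abs_le.mp h1
  have hd2 := abs_le.mp h2
  have hs : Real.sqrt z ≤ Real.sqrt (a ^ 2 + b ^ 2) * (1 + 3 * ε / 4) := by
    rw [hz]
    calc Real.sqrt ((a ^ 2 + b ^ 2) * (1 + δ₁))
        ≤ Real.sqrt ((a ^ 2 + b ^ 2) * (1 + 3 * ε / 4) ^ 2) := by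
          apply Real.sqrt_le_sqrt
          have : (1 + δ₁ : ℝ) ≤ (1 + 3 * ε / 4) ^ 2 := by nlinarith
          nlinarith
      _ = Real.sqrt (a ^ 2 + b ^ 2) * (1 + 3 * ε / 4) := by
          rw [Real.sqrt_mul hab.le, Real.sqrt_sq (by linarith)]
  have hsz : (0:ℝ) ≤ Real.sqrt z := Real.sqrt_nonneg _
  have hsab : (0:ℝ) ≤ Real.sqrt (a ^ 2 + b ^ 2) := Real.sqrt_nonneg _
  calc h = Real.sqrt z * (1 + δ₂) := hh
    _ ≤ Real.sqrt z * (1 + ε / 2) := by nlinarith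
    _ ≤ Real.sqrt (a ^ 2 + b ^ 2) * (1 + 3 * ε / 4) * (1 + ε / 2) := by nlinarith
    _ = Real.sqrt (a ^ 2 + b ^ 2) * (1 + 5 * ε / 4 + 3 * ε ^ 2 / 8) := by ring
end

section
/- For real h > 0 and real x with |x| < h², we have |sqrt(h² - x) - (h - x/(2h))| ≤ x²/(2h³). -/
theorem maclaurin_correction_error (h x : ℝ) (hh : 0 < h) (hx : |x| < h ^ 2) :
    |Real.sqrt (h ^ 2 - x) - (h - x / (2 * h))| ≤ x ^ 2 / (2 * h ^ 3) := by
  obtain ⟨hx1, hx2⟩ := abs_lt.mp hx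
  set s := Real.sqrt (h ^ 2 - x) with hsdef
  have hnn : (0:ℝ) ≤ h ^ 2 - x := by linarith
  have hs : s ^ 2 = h ^ 2 - x := Real.sq_sqrt hnn
  have hs0 : 0 ≤ s := Real.sqrt_nonneg _
  have hd : h / 2 < h - x / (2 * h) := by
    have : x / (2 * h) < h / 2 := by
      rw [div_lt_div_iff₀ (by positivity) two_pos]
      nlinarith
    linarith
  have hds : 0 < h - x / (2 * h) + s := by linarith
  have key : (h - x / (2 * h) - s) * (h - x / (2 * h) + s) = x ^ 2 / (4 * h ^ 2) := by
    have hne : h ≠ 0 := ne_of_gt hh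
    field_simp
    linear_combination (-16 * h ^ 2) * hs
  have hrhs : (0:ℝ) ≤ x ^ 2 / (2 * h ^ 3) := by positivity
  have hkpos : (0:ℝ) ≤ x ^ 2 / (4 * h ^ 2) := by positivity
  have hle : s ≤ h - x / (2 * h) := by nlinarith
  have h2 : h - x / (2 * h) - s ≤ x ^ 2 / (2 * h ^ 3) := by
    have e1 : x ^ 2 / (4 * h ^ 2) = x ^ 2 / (2 * h ^ 3) * (h / 2) := by
      field_simp; ring
    have e2 : x ^ 2 / (2 * h ^ 3) * (h / 2) ≤ x ^ 2 / (2 * h ^ 3) * (h - x / (2 * h) + s) :=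
      mul_le_mul_of_nonneg_left (by linarith) hrhs
    have := key.le.trans (e1.le.trans e2)
    exact le_of_mul_le_mul_right this hds
  rw [abs_le]
  constructor <;> linarith
end

section
/- If h > 0, x = h² - s for a real s > 0, and |x| ≤ h²/2, then |(h - x/(2h)) - sqrt(s)| ≤ x²/(2 sqrt(s)³) · (1/(2(1 - |x|/h²))); in particular the corrected value h - x/(2h) approximates sqrt(s) with error O(x²). -/
theorem corrected_value_error (h s x : ℝ) (hh : 0 < h) (hs : 0 < s)
    (hx : x = h ^ 2 - s) (hxb : |x| ≤ h ^ 2 / 2) :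
    |(h - x / (2 * h)) - Real.sqrt s| ≤
      x ^ 2 / (2 * Real.sqrt s ^ 3) * (1 / (2 * (1 - |x| / h ^ 2))) := by
  set t := Real.sqrt s with ht
  have htpos : 0 < t := Real.sqrt_pos.mpr hs
  have hts : t ^ 2 = s := Real.sq_sqrt hs.le
  have hx2 : x = h ^ 2 - t ^ 2 := by rw [hts]; exact hx
  have key : (h - x / (2 * h)) - t = (h - t) ^ 2 / (2 * h) := by
    rw [hx2]; field_simp; ring
  rw [key, abs_of_nonneg (by positivity)]
  have ha : |x| / h ^ 2 ≤ 1 / 2 := by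
    rw [div_le_iff₀ (by positivity)]; linarith
  have hd : 0 < 1 - |x| / h ^ 2 := by linarith
  rw [div_mul_div_comm, mul_one, div_le_div_iff₀ (by positivity) (by positivity)]
  -- goal: (h-t)^2 * (2*t^3*(2*(1-|x|/h^2))) ≤ x^2 * (2*h)
  have hkey : 4 * t ^ 3 * (1 - |x| / h ^ 2) ≤ h * (h + t) ^ 2 := by
    have h1 : (1 - |x| / h ^ 2) = (h ^ 2 - |x|) / h ^ 2 := by field_simp
    rw [h1, ← mul_div_assoc, div_le_iff₀ (by positivity : (0:ℝ) < h ^ 2)]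
    rcases abs_cases x with ⟨he, hx0⟩ | ⟨he, hx0⟩ <;> rw [he, hx2]
    · have hth : t ≤ h := by nlinarith
      nlinarith [mul_nonneg (sub_nonneg.2 hth)
        (show (0:ℝ) ≤ h^4 + 3*h^3*t + 4*h^2*t^2 + 4*h*t^3 + 4*t^4 by positivity)]
    · nlinarith [mul_nonneg (sq_nonneg (h - t))
        (show (0:ℝ) ≤ 4*t^3 + 8*h*t^2 + 4*h^2*t + h^3 by positivity)]
  have hx2' : x ^ 2 = (h - t) ^ 2 * (h + t) ^ 2 := by rw [hx2]; ring
  nlinarith [mul_le_mul_of_nonneg_left hkey (sq_nonneg (h - t))]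
end
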